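/- arXiv:0810.1372 — 2 statements merged into one kernel-verified Lean document; each statement's English description precedes it below -/
import Mathlib

section
/- Let K be an algebraically closed field of characteristic 0 and n ≥ 2. Let ℓ be a nonzero linear form in K[x0,…,xn] and H ⊂ P^n its zero locus. Let Y be the fat point scheme m_1P_1 + … + m_kP_k of P^n supported at distinct points P_1,…,P_k, and let Res_H(Y) be the fat point scheme obtained from Y by replacing the multiplicity m_i by m_i − 1 at every point P_i lying on H (and keeping m_i at points off H). Fix integers d > 0, z > 0, γ ≥ 0, and denote by V_e(Z) the space of degree-e homogeneous polynomials satisfying the order-vanishing conditions of a fat point scheme Z. If dim V_d(Y) ≤ γ + z and dim V_{d−1}(Res_H(Y)) ≤ γ, then there exist z distinct points Q_1, …, Q_z on H, distinct from P_1,…,P_k, such that the space of degree-d homogeneous polynomials satisfying the conditions of Y and additionally vanishing at each Q_j has dimension at most γ. -/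
/-- Iterated partial derivative along a list of coordinate directions. -/
noncomputable def derivAlong (K : Type*) [CommRing K] (n : ℕ) (l : List (Fin n)) :
    Module.End K (MvPolynomial (Fin n) K) :=
  (l.map fun i => (MvPolynomial.pderiv (R := K) i).toLinearMap).prod

/-- The submodule of polynomials all of whose partial derivatives of total order `< m`
vanish at the point `P`, i.e. polynomials vanishing to order `m` at `P`. -/
noncomputable def vanishingSubmodule (K : Type*) [CommRing K] (n m : ℕ) (P : Fin n → K) :
    Submodule K (MvPolynomial (Fin n) K) :=
  ⨅ l ∈ {l : List (Fin n) | l.length < m},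
    LinearMap.ker ((MvPolynomial.aeval P).toLinearMap.comp (derivAlong K n l))

/-- The space of homogeneous polynomials of degree `d` vanishing to order `m i`
at the point `P i`, for all `i`. -/
noncomputable def fatPointSpace (K : Type*) [CommRing K] (n : ℕ) {k : ℕ} (d : ℕ)
    (P : Fin k → (Fin n → K)) (m : Fin k → ℕ) : Submodule K (MvPolynomial (Fin n) K) :=
  MvPolynomial.homogeneousSubmodule (Fin n) K d ⊓ ⨅ i, vanishingSubmodule K n (m i) (P i)

/-- The vectors `P i` represent distinct points of projective space: each is nonzero
and no two are proportional. -/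
def ProjDistinct {K : Type*} [CommRing K] {n k : ℕ} (P : Fin k → (Fin n → K)) : Prop :=
  (∀ i, P i ≠ 0) ∧ ∀ i j, i ≠ j → ∀ c : K, P i ≠ c • P j

open MvPolynomial Module

noncomputable section
namespace Stmt8H
variable {K : Type*} [Field K] {N : ℕ}
def lin (a : Fin N → K) : MvPolynomial (Fin N) K := ∑ i, C (a i) * X i

theorem eval_lin (a : Fin N → K) (y : Fin N → K) :
    eval y (lin a) = ∑ i, a i * y i := by
  simp [lin]

theorem lin_isHomogeneous (a : Fin N → K) : (lin a).IsHomogeneous 1 := by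
  apply IsHomogeneous.sum
  intro i _
  simpa using (isHomogeneous_C (Fin N) (a i)).mul (isHomogeneous_X K i)

theorem pderiv_lin (a : Fin N → K) (i : Fin N) : pderiv i (lin a) = C (a i) := by
  rw [lin, map_sum]
  rw [Finset.sum_eq_single i]
  · simp [pderiv_C_mul]
  · intro j _ hj
    rw [pderiv_C_mul, pderiv_X_of_ne hj, mul_zero]
  · simp

theorem lin_ne_zero {a : Fin N → K} {i : Fin N} (h : a i ≠ 0) : lin a ≠ 0 := by
  intro h0
  apply h
  have h2 := eval_lin a (Pi.single i 1)
  rw [h0] at h2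
  simp only [map_zero] at h2
  rw [Finset.sum_eq_single i (fun j _ hj => by rw [Pi.single_eq_of_ne hj, mul_zero])
    (by simp)] at h2
  simpa using h2.symm

theorem degree_one_eq_single {μ : Fin N →₀ ℕ} (hμ : μ.degree = 1) :
    ∃ i, μ = Finsupp.single i 1 := by
  have hne : μ.support.Nonempty := by
    by_contra hc
    rw [Finset.not_nonempty_iff_eq_empty] at hc
    rw [Finsupp.degree_apply, hc] at hμ
    simp at hμ
  obtain ⟨i, hi⟩ := hne
  have hμi : 1 ≤ μ i := Nat.one_le_iff_ne_zero.2 (Finsupp.mem_support_iff.1 hi)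
  have hzero : ∀ j, j ≠ i → μ j = 0 := by
    intro j hj
    by_contra hc
    have hsub : ({i, j} : Finset (Fin N)) ⊆ μ.support := by
      intro x hx
      simp only [Finset.mem_insert, Finset.mem_singleton] at hx
      rcases hx with rfl | rfl
      · exact hi
      · exact Finsupp.mem_support_iff.2 hc
    have h2 : 2 ≤ μ.degree := by
      calc 2 = 1 + 1 := rfl
      _ ≤ μ i + μ j := Nat.add_le_add hμi (Nat.one_le_iff_ne_zero.2 hc)
      _ = ∑ x ∈ ({i, j} : Finset (Fin N)), μ x := (Finset.sum_pair (Ne.symm hj)).symm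
      _ ≤ ∑ x ∈ μ.support, μ x := Finset.sum_le_sum_of_subset hsub
      _ = μ.degree := rfl
    omega
  have hsupp : μ.support ⊆ {i} := by
    intro x hx
    simp only [Finset.mem_singleton]
    by_contra hc
    exact Finsupp.mem_support_iff.1 hx (hzero x hc)
  have hdi : μ.degree = μ i := by
    rw [Finsupp.degree_apply, Finset.sum_subset hsupp (fun x _ hxs => Finsupp.notMem_support_iff.1 hxs)]
    simp
  refine ⟨i, ?_⟩
  ext j
  rcases eq_or_ne j i with rfl | hj
  · simp [← hdi, hμ]
  · simp [hzero j hj, Finsupp.single_eq_of_ne' (Ne.symm hj)]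

theorem exists_lin_rep {ℓ : MvPolynomial (Fin N) K} (h : ℓ.IsHomogeneous 1) :
    ∃ a : Fin N → K, ℓ = lin a := by
  refine ⟨fun i => coeff (Finsupp.single i 1) ℓ, ?_⟩
  have hdeg : ∀ i : Fin N, (Finsupp.single i 1 : Fin N →₀ ℕ).degree = 1 := by
    intro i
    simp [Finsupp.degree_apply, Finsupp.support_single_ne_zero _ one_ne_zero]
  ext μ
  rw [lin, coeff_sum]
  simp only [coeff_C_mul, coeff_X']
  rcases eq_or_ne μ.degree 1 with h1 | h1
  · obtain ⟨i, rfl⟩ := degree_one_eq_single h1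
    rw [Finset.sum_eq_single i]
    · simp
    · intro j _ hj
      rw [if_neg, mul_zero]
      intro hc
      exact hj (Finsupp.single_left_injective one_ne_zero hc)
    · simp
  · rw [h.coeff_eq_zero h1, Finset.sum_eq_zero]
    intro j _
    rw [if_neg, mul_zero]
    intro hc
    rw [← hc] at h1
    exact h1 (hdeg j)

theorem derivAlong_nil (f : MvPolynomial (Fin N) K) : derivAlong K N [] f = f := rfl

theorem derivAlong_cons (i : Fin N) (l : List (Fin N)) (f : MvPolynomial (Fin N) K) :
    derivAlong K N (i :: l) f = pderiv i (derivAlong K N l f) := by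
  simp [derivAlong]

theorem pderiv_comm' (i j : Fin N) (f : MvPolynomial (Fin N) K) :
    pderiv i (pderiv j f) = pderiv j (pderiv i f) := by
  induction f using MvPolynomial.induction_on' with
  | monomial s a =>
    simp only [pderiv_monomial]
    rcases eq_or_ne i j with rfl | hij
    · rfl
    · rw [Finsupp.tsub_apply, Finsupp.tsub_apply,
        Finsupp.single_eq_of_ne' hij, Finsupp.single_eq_of_ne' (Ne.symm hij),
        tsub_zero, tsub_zero, tsub_tsub, tsub_tsub, add_comm (Finsupp.single j 1),
        mul_right_comm]
  | add p q hp hq => simp [hp, hq]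

theorem pderiv_pairwise (l : List (Fin N)) :
    List.Pairwise (fun a b : Fin N =>
      Commute ((pderiv (R := K) a).toLinearMap) ((pderiv b).toLinearMap)) l := by
  induction l with
  | nil => exact List.Pairwise.nil
  | cons x xs ih =>
    exact List.Pairwise.cons (fun b _ => LinearMap.ext fun f => pderiv_comm' x b f) ih

theorem derivAlong_perm {l l' : List (Fin N)} (h : l.Perm l') :
    derivAlong K N l = derivAlong K N l' := by
  unfold derivAlong
  refine List.Perm.prod_eq' (h.map _) ?_
  rw [List.pairwise_map]
  exact pderiv_pairwise l

theorem aeval_eq_eval' (P : Fin N → K) (f : MvPolynomial (Fin N) K) :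
    aeval P f = eval P f := rfl

theorem mem_vanishingSubmodule {m : ℕ} {P : Fin N → K} {f : MvPolynomial (Fin N) K} :
    f ∈ vanishingSubmodule K N m P ↔
      ∀ l : List (Fin N), l.length < m → eval P (derivAlong K N l f) = 0 := by
  simp only [vanishingSubmodule, Submodule.mem_iInf, LinearMap.mem_ker, LinearMap.coe_comp,
    Function.comp_apply, Set.mem_setOf_eq, AlgHom.toLinearMap_apply]
  constructor
  · intro h l hl
    exact h l hl
  · intro h l hl
    exact h l hl

theorem vanishingSubmodule_one (P : Fin N → K) :
    vanishingSubmodule K N 1 P = LinearMap.ker (MvPolynomial.aeval (R := K) P).toLinearMap := by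
  ext f
  rw [mem_vanishingSubmodule]
  constructor
  · intro h
    simpa [derivAlong] using h [] (by simp)
  · intro h l hl
    rw [Nat.lt_one_iff, List.length_eq_zero_iff] at hl
    subst hl
    simpa [derivAlong] using h



theorem derivAlong_lin_mul (a : Fin N → K) (G : MvPolynomial (Fin N) K) (l : List (Fin N)) :
    derivAlong K N l (lin a * G) =
      lin a * derivAlong K N l G +
      ∑ j : Fin l.length, C (a (l.get j)) * derivAlong K N (l.eraseIdx (j : ℕ)) G := by
  induction l with
  | nil => simp [derivAlong_nil]
  | cons i l ih =>
    rw [derivAlong_cons, ih, map_add, pderiv_mul, pderiv_lin, map_sum]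
    simp only [pderiv_C_mul, ← derivAlong_cons]
    show _ = lin a * derivAlong K N (i :: l) G + ∑ j : Fin (l.length + 1),
      C (a ((i :: l).get j)) * derivAlong K N ((i :: l).eraseIdx (j : ℕ)) G
    rw [Fin.sum_univ_succ]
    simp only [List.get_cons_zero, Fin.val_zero, List.eraseIdx_cons_zero, Fin.val_succ,
      List.get_cons_succ', List.eraseIdx_cons_succ]
    ring

theorem vanish_res_of_ne {a : Fin N → K} {P : Fin N → K} (hP : eval P (lin a) ≠ 0)
    {G : MvPolynomial (Fin N) K} {m : ℕ}
    (h : ∀ l : List (Fin N), l.length < m → eval P (derivAlong K N l (lin a * G)) = 0) :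
    ∀ l : List (Fin N), l.length < m → eval P (derivAlong K N l G) = 0 := by
  suffices H : ∀ t : ℕ, ∀ l : List (Fin N), l.length = t → l.length < m →
      eval P (derivAlong K N l G) = 0 by
    intro l hl
    exact H l.length l rfl hl
  intro t
  induction t using Nat.strong_induction_on with
  | _ t ih =>
    intro l hlen hlm
    subst hlen
    have hkey := congrArg (eval P) (derivAlong_lin_mul a G l)
    rw [h l hlm, map_add, map_mul, map_sum] at hkey
    have hz : ∀ j : Fin l.length,
        eval P (C (a (l.get j)) * derivAlong K N (l.eraseIdx (j : ℕ)) G) = 0 := by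
      intro j
      have hle := List.length_eraseIdx_add_one j.2
      rw [map_mul, ih (l.eraseIdx (j : ℕ)).length (by omega) _ rfl (by omega), mul_zero]
    rw [Finset.sum_eq_zero (fun j _ => hz j), add_zero] at hkey
    exact (mul_eq_zero.1 hkey.symm).resolve_left hP

theorem count_lt_length {l : List (Fin N)} {i0 : Fin N} {j : Fin l.length}
    (hj : l.get j ≠ i0) : l.count i0 < l.length := by
  rcases Nat.lt_or_ge (l.count i0) l.length with h | h
  · exact h
  · exfalso
    have heq : l.count i0 = l.length := le_antisymm List.count_le_length h
    rw [List.count_eq_length] at heq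
    exact hj (heq _ (l.get_mem _)).symm

theorem vanish_res_of_eq [CharZero K] {a : Fin N → K} {i0 : Fin N} (ha : a i0 ≠ 0)
    {P : Fin N → K} (hP : eval P (lin a) = 0)
    {G : MvPolynomial (Fin N) K} {m : ℕ}
    (h : ∀ l : List (Fin N), l.length < m → eval P (derivAlong K N l (lin a * G)) = 0) :
    ∀ l : List (Fin N), l.length < m - 1 → eval P (derivAlong K N l G) = 0 := by
  suffices H : ∀ t : ℕ, ∀ l : List (Fin N), l.length - l.count i0 = t → l.length < m - 1 →
      eval P (derivAlong K N l G) = 0 by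
    intro l hl
    exact H _ l rfl hl
  intro t
  induction t using Nat.strong_induction_on with
  | _ t ih =>
    intro l hν hlm
    have hkey := congrArg (eval P) (derivAlong_lin_mul a G (i0 :: l))
    rw [h (i0 :: l) (by simp only [List.length_cons]; omega), map_add, map_mul, map_sum,
      hP, zero_mul, zero_add] at hkey
    have hkey2 : (0 : K) = ∑ j : Fin (l.length + 1),
        eval P (C (a ((i0 :: l).get j)) * derivAlong K N ((i0 :: l).eraseIdx (j : ℕ)) G) := hkey
    clear hkey
    rw [Fin.sum_univ_succ] at hkey2
    rename' hkey2 => hkey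
    simp only [List.get_cons_zero, Fin.val_zero, List.eraseIdx_cons_zero, Fin.val_succ,
      List.get_cons_succ', List.eraseIdx_cons_succ, map_mul, eval_C] at hkey
    have hterm : ∀ j : Fin l.length,
        a (l.get j) * eval P (derivAlong K N (i0 :: l.eraseIdx (j : ℕ)) G)
          = if l.get j = i0 then a i0 * eval P (derivAlong K N l G) else 0 := by
      intro j
      have hle := List.length_eraseIdx_add_one j.2
      have hperm : (l.get j :: l.eraseIdx (j : ℕ)).Perm l := by
        refine List.Perm.trans (List.Perm.cons _ ?_) (List.perm_cons_erase (l.get_mem _)).symm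
        exact (List.erase_getElem j.2).symm
      by_cases hj : l.get j = i0
      · rw [hj, if_pos rfl]
        rw [hj] at hperm
        rw [derivAlong_perm hperm]
      · rw [if_neg hj]
        have hcount : l.count i0 < l.length := count_lt_length hj
        have hc2 : (l.eraseIdx (j : ℕ)).count i0 = l.count i0 := by
          have := hperm.count_eq i0
          rw [List.count_cons_of_ne hj] at this
          omega
        have hmeas : (i0 :: l.eraseIdx (j : ℕ)).length
            - (i0 :: l.eraseIdx (j : ℕ)).count i0 < t := by
          rw [List.length_cons, List.count_cons_self, hc2, hle]
          omega
        rw [ih _ hmeas _ rfl (by rw [List.length_cons, hle]; exact hlm), mul_zero]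
    rw [Finset.sum_congr rfl (fun j _ => hterm j)] at hkey
    rw [Finset.sum_ite, Finset.sum_const, Finset.sum_const_zero, add_zero, nsmul_eq_mul] at hkey
    set c := (Finset.univ.filter (fun j : Fin l.length => l.get j = i0)).card with hc
    set E := eval P (derivAlong K N l G) with hE
    have hfin : ((1 + c : ℕ) : K) * (a i0 * E) = 0 := by
      push_cast
      linear_combination -hkey
    rcases mul_eq_zero.1 hfin with h1 | h1
    · exact absurd h1 (Nat.cast_ne_zero.2 (by omega))
    · rcases mul_eq_zero.1 h1 with h2 | h2
      · exact absurd h2 ha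
      · exact h2


def subst0 (a : Fin N → K) (i0 : Fin N) : Fin N → MvPolynomial (Fin N) K :=
  fun j => X j - if j = i0 then C (a i0)⁻¹ * lin a else 0

theorem aeval_subst0_lin {a : Fin N → K} {i0 : Fin N} (ha : a i0 ≠ 0) :
    aeval (subst0 a i0) (lin a) = 0 := by
  rw [lin, map_sum]
  have hterm : ∀ j : Fin N, aeval (subst0 a i0) (C (a j) * X j)
      = C (a j) * X j - (if j = i0 then C (a j) * (C (a i0)⁻¹ * lin a) else 0) := by
    intro j
    rw [map_mul, aeval_C, aeval_X, subst0]
    by_cases hj : j = i0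
    · subst hj
      simp [algebraMap_eq, mul_sub]
    · simp only [if_neg hj, algebraMap_eq, mul_sub, sub_zero, mul_zero]
  rw [Finset.sum_congr rfl (fun j _ => hterm j), Finset.sum_sub_distrib]
  rw [Finset.sum_ite_eq' Finset.univ i0 (fun j => C (a j) * (C (a i0)⁻¹ * lin a))]
  rw [if_pos (Finset.mem_univ i0), ← mul_assoc, ← C_mul, mul_inv_cancel₀ ha, C_1, one_mul]
  rw [← lin, sub_self]

theorem sub_aeval_mem_span (a : Fin N → K) (i0 : Fin N) (F : MvPolynomial (Fin N) K) :
    F - aeval (subst0 a i0) F ∈ Ideal.span {lin a} := by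
  induction F using MvPolynomial.induction_on with
  | C c =>
    rw [aeval_C, algebraMap_eq, sub_self]
    exact Ideal.zero_mem _
  | add p q hp hq =>
    have h2 : p + q - (aeval (subst0 a i0) p + aeval (subst0 a i0) q)
        = (p - aeval (subst0 a i0) p) + (q - aeval (subst0 a i0) q) := by ring
    rw [map_add, h2]
    exact Ideal.add_mem _ hp hq
  | mul_X p j hp =>
    rw [map_mul, aeval_X]
    have heq : p * X j - aeval (subst0 a i0) p * subst0 a i0 j
        = (p - aeval (subst0 a i0) p) * X j
          + aeval (subst0 a i0) p * (X j - subst0 a i0 j) := by ring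
    rw [heq]
    refine Ideal.add_mem _ (Ideal.mul_mem_right _ _ hp) ?_
    have heq2 : X j - subst0 a i0 j = if j = i0 then C (a i0)⁻¹ * lin a else 0 := by
      rw [subst0]; ring
    rw [heq2]
    by_cases hj : j = i0
    · rw [if_pos hj]
      exact Ideal.mul_mem_left _ _ (Ideal.mul_mem_left _ _
        (Ideal.subset_span (Set.mem_singleton _)))
    · rw [if_neg hj, mul_zero]
      exact Ideal.zero_mem _

theorem exists_factor_of_aeval_eq_zero {a : Fin N → K} {i0 : Fin N}
    {F : MvPolynomial (Fin N) K} (h : aeval (subst0 a i0) F = 0) :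
    ∃ G, F = lin a * G := by
  have := sub_aeval_mem_span a i0 F
  rw [h, sub_zero, Ideal.mem_span_singleton'] at this
  obtain ⟨G, hG⟩ := this
  exact ⟨G, by rw [← hG, mul_comm]⟩

theorem eval_aeval' (y : Fin N → K) (g : Fin N → MvPolynomial (Fin N) K)
    (F : MvPolynomial (Fin N) K) :
    eval y (aeval g F) = eval (fun j => eval y (g j)) F := by
  rw [aeval_def, MvPolynomial.eval_eval₂]
  have hc : (eval y).comp (algebraMap K (MvPolynomial (Fin N) K)) = RingHom.id K := by
    ext c
    simp [algebraMap_eq]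
  rw [hc]
  rfl

/-- the projection of `y` onto the hyperplane, obtained by evaluating `subst0`. -/
def piv (a : Fin N → K) (i0 : Fin N) (y : Fin N → K) : Fin N → K :=
  fun j => eval y (subst0 a i0 j)

theorem eval_piv_lin {a : Fin N → K} {i0 : Fin N} (ha : a i0 ≠ 0) (y : Fin N → K) :
    eval (piv a i0 y) (lin a) = 0 := by
  have := eval_aeval' y (subst0 a i0) (lin a)
  rw [aeval_subst0_lin ha, map_zero] at this
  exact this.symm

theorem piv_apply_ne {a : Fin N → K} {i0 : Fin N} {j : Fin N} (hj : j ≠ i0) (y : Fin N → K) :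
    piv a i0 y j = y j := by
  rw [piv, subst0, if_neg hj, sub_zero, eval_X]

theorem eval_eq_zero_of_isHomogeneous_pos {F : MvPolynomial (Fin N) K} {d : ℕ}
    (hF : F.IsHomogeneous d) (hd : 0 < d) : eval (0 : Fin N → K) F = 0 := by
  classical
  rw [eval_eq]
  refine Finset.sum_eq_zero fun μ hμ => ?_
  have hμd : μ.degree = d := by
    rw [Finsupp.degree_eq_weight_one]
    exact hF (Finsupp.mem_support_iff.1 hμ)
  have hne : μ.support.Nonempty := by
    by_contra hc
    rw [Finset.not_nonempty_iff_eq_empty] at hc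
    rw [Finsupp.degree_apply, hc] at hμd
    simp at hμd
    omega
  obtain ⟨i, hi⟩ := hne
  rw [Finset.prod_eq_zero hi (zero_pow (Finsupp.mem_support_iff.1 hi)), mul_zero]


theorem exists_w (hN : 3 ≤ N) (v : Fin N → K) (i0 : Fin N) :
    ∃ w : Fin N → K, w ≠ 0 ∧ w i0 = 0 ∧ ∑ j, w j * v j = 0 := by
  let φ2 : (Fin N → K) →ₗ[K] K := ∑ j, v j • LinearMap.proj j
  let φ : (Fin N → K) →ₗ[K] K × K := (LinearMap.proj i0).prod φ2
  have hker : LinearMap.ker φ ≠ ⊥ := by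
    intro hk
    have hinj : Function.Injective φ := LinearMap.ker_eq_bot.1 hk
    have := LinearMap.finrank_le_finrank_of_injective hinj
    rw [Module.finrank_fintype_fun_eq_card, Fintype.card_fin] at this
    have h2 : finrank K (K × K) = 2 := by simp
    omega
  obtain ⟨w, hwker, hw0⟩ := (Submodule.ne_bot_iff _).1 hker
  rw [LinearMap.mem_ker] at hwker
  have hpair := Prod.mk.injEq .. ▸ hwker
  have h1 : w i0 = 0 := congrArg Prod.fst hwker
  have h2 : φ2 w = 0 := congrArg Prod.snd hwker
  refine ⟨w, hw0, h1, ?_⟩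
  rw [← h2]
  simp only [φ2, LinearMap.sum_apply, LinearMap.smul_apply, LinearMap.proj_apply,
    smul_eq_mul]
  exact Finset.sum_congr rfl fun j _ => mul_comm _ _

theorem aeval_subst0_eq_zero_of_vanish [CharZero K]
    (hN : 3 ≤ N) {a : Fin N → K} {i0 : Fin N} (ha : a i0 ≠ 0)
    {F : MvPolynomial (Fin N) K} {d : ℕ} (hFhom : F.IsHomogeneous d) (hd : 0 < d)
    (avoid : Finset (Fin N → K))
    (hvan : ∀ Q : Fin N → K, Q ≠ 0 → eval Q (lin a) = 0 →
      (∀ v ∈ avoid, ∀ c : K, Q ≠ c • v) → eval Q F = 0) :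
    aeval (subst0 a i0) F = 0 := by
  classical
  choose w hw0 hwi0 hwv using fun v : Fin N → K => exists_w hN v i0
  set Pbad : MvPolynomial (Fin N) K := ∏ v ∈ avoid, lin (w v) with hPbad
  have hzero : ∀ y : Fin N → K, eval y (aeval (subst0 a i0) F * Pbad) = 0 := by
    intro y
    rw [map_mul, eval_aeval']
    have hQlin : eval (piv a i0 y) (lin a) = 0 := eval_piv_lin ha y
    show eval (piv a i0 y) F * eval y Pbad = 0
    by_cases hQ0 : piv a i0 y = 0
    · rw [hQ0, eval_eq_zero_of_isHomogeneous_pos hFhom hd, zero_mul]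
    by_cases hprop : ∃ v ∈ avoid, ∃ c : K, piv a i0 y = c • v
    · obtain ⟨v, hv, c, hc⟩ := hprop
      have hfactor : eval y (lin (w v)) = 0 := by
        rw [eval_lin]
        have hsame : ∑ j, w v j * y j = ∑ j, w v j * piv a i0 y j := by
          refine Finset.sum_congr rfl fun j _ => ?_
          rcases eq_or_ne j i0 with rfl | hj
          · rw [hwi0 v, zero_mul, zero_mul]
          · rw [piv_apply_ne hj]
        rw [hsame, hc]
        have : ∑ j, w v j * (c • v) j = c * ∑ j, w v j * v j := by
          rw [Finset.mul_sum]
          refine Finset.sum_congr rfl fun j _ => ?_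
          simp [Pi.smul_apply, smul_eq_mul]
          ring
        rw [this, hwv v, mul_zero]
      rw [hPbad, map_prod, Finset.prod_eq_zero hv hfactor, mul_zero]
    · push_neg at hprop
      rw [hvan (piv a i0 y) hQ0 hQlin hprop, zero_mul]
  have hmul : aeval (subst0 a i0) F * Pbad = 0 := by
    apply MvPolynomial.funext
    intro x
    rw [hzero x, map_zero]
  rcases mul_eq_zero.1 hmul with h | h
  · exact h
  · exfalso
    have : Pbad ≠ 0 := by
      rw [hPbad]
      refine Finset.prod_ne_zero_iff.2 fun v _ => ?_
      obtain ⟨j, hj⟩ := Function.ne_iff.1 (hw0 v)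
      exact lin_ne_zero (by simpa using hj)
    exact this h

theorem isHomogeneous_of_lin_mul {a : Fin N → K} (hla : lin a ≠ 0)
    {G : MvPolynomial (Fin N) K} {e : ℕ}
    (h : (lin a * G).IsHomogeneous (e + 1)) : G.IsHomogeneous e := by
  have hcomp : ∀ j : ℕ, j ≠ e → homogeneousComponent j G = 0 := by
    intro j hj
    rcases Nat.lt_or_ge G.totalDegree j with hlt | hge
    · exact homogeneousComponent_eq_zero j G hlt
    have hGsum : lin a * G = ∑ e' ∈ Finset.range (G.totalDegree + 1),
        lin a * homogeneousComponent e' G := by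
      rw [← Finset.mul_sum, sum_homogeneousComponent]
    have happ := congrArg (homogeneousComponent (j + 1)) hGsum
    rw [homogeneousComponent_of_mem h, if_neg (by omega), map_sum] at happ
    have hterm : ∀ e' ∈ Finset.range (G.totalDegree + 1),
        homogeneousComponent (j + 1) (lin a * homogeneousComponent e' G)
          = if e' = j then lin a * homogeneousComponent e' G else 0 := by
      intro e' _
      have hmem : lin a * homogeneousComponent e' G ∈
          homogeneousSubmodule (Fin N) K (e' + 1) := by
        rw [mem_homogeneousSubmodule, add_comm e' 1]
        exact (lin_isHomogeneous a).mul (homogeneousComponent_isHomogeneous e' G)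
      rw [homogeneousComponent_of_mem hmem]
      by_cases he : e' = j
      · rw [if_pos (by omega), if_pos he]
      · rw [if_neg (by omega), if_neg he]
    rw [Finset.sum_congr rfl hterm, Finset.sum_ite_eq' (Finset.range (G.totalDegree + 1)) j,
      if_pos (Finset.mem_range.2 (by omega))] at happ
    exact (mul_eq_zero.1 happ.symm).resolve_left hla
  have hG : G = homogeneousComponent e G := by
    conv_lhs => rw [← sum_homogeneousComponent (φ := G)]
    rw [Finset.sum_eq_single e (fun j _ hj => hcomp j hj)
      (fun he => homogeneousComponent_eq_zero e G (by
        rw [Finset.mem_range] at he; omega))]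
  rw [hG]
  exact homogeneousComponent_isHomogeneous e G


theorem fd_homog (d : ℕ) :
    FiniteDimensional K (homogeneousSubmodule (Fin N) K d) := by
  have hle : homogeneousSubmodule (Fin N) K d ≤ restrictTotalDegree (Fin N) K d := by
    intro f hf
    rw [mem_restrictTotalDegree]
    exact ((mem_homogeneousSubmodule _ _).1 hf).totalDegree_le
  exact Submodule.finiteDimensional_of_le hle

theorem fatPointSpace_le_homog {k : ℕ} (d : ℕ) (P : Fin k → (Fin N → K)) (m : Fin k → ℕ) :
    fatPointSpace K N d P m ≤ homogeneousSubmodule (Fin N) K d := inf_le_left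

theorem fd_of_le_fat {k : ℕ} {d : ℕ} {P : Fin k → (Fin N → K)} {m : Fin k → ℕ}
    {V : Submodule K (MvPolynomial (Fin N) K)} (hV : V ≤ fatPointSpace K N d P m) :
    FiniteDimensional K V := by
  haveI := fd_homog (K := K) (N := N) d
  exact Submodule.finiteDimensional_of_le (hV.trans (fatPointSpace_le_homog d P m))

theorem finrank_le_div [CharZero K] (hN : 3 ≤ N) {a : Fin N → K} {i0 : Fin N} (ha : a i0 ≠ 0)
    {k : ℕ} {P : Fin k → (Fin N → K)} {m m' : Fin k → ℕ}
    (hm' : ∀ i, (eval (P i) (lin a) = 0 → m' i = m i - 1) ∧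
      (eval (P i) (lin a) ≠ 0 → m' i = m i))
    {d : ℕ} (hd : 0 < d)
    {V : Submodule K (MvPolynomial (Fin N) K)} (hV : V ≤ fatPointSpace K N d P m)
    (avoid : Finset (Fin N → K))
    (hvan : ∀ F ∈ V, ∀ Q : Fin N → K, Q ≠ 0 → eval Q (lin a) = 0 →
      (∀ v ∈ avoid, ∀ c : K, Q ≠ c • v) → eval Q F = 0) :
    finrank K V ≤ finrank K (fatPointSpace K N (d - 1) P m') := by
  have hla : lin a ≠ 0 := lin_ne_zero ha
  set μL := LinearMap.mulLeft K (lin a) with hμL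
  have hinj : Function.Injective μL := fun x y hxy => by
    have : lin a * x = lin a * y := hxy
    exact mul_left_cancel₀ hla this
  set W := Submodule.comap μL V with hWdef
  have hmapW : Submodule.map μL W = V := by
    apply le_antisymm
    · exact Submodule.map_comap_le _ _
    · intro F hF
      have hFfat := hV hF
      have hFhom : F.IsHomogeneous d :=
        (mem_homogeneousSubmodule _ _).1 (Submodule.mem_inf.1 hFfat).1
      have h0 : aeval (subst0 a i0) F = 0 :=
        aeval_subst0_eq_zero_of_vanish hN ha hFhom hd avoid (hvan F hF)
      obtain ⟨G, hG⟩ := exists_factor_of_aeval_eq_zero h0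
      refine ⟨G, ?_, hG.symm⟩
      have hmem : lin a * G ∈ V := by rw [← hG]; exact hF
      exact hmem
  have hrank : finrank K W = finrank K V := by
    rw [← hmapW]
    exact (Submodule.equivMapOfInjective μL hinj W).finrank_eq
  have hWle : W ≤ fatPointSpace K N (d - 1) P m' := by
    intro G hGW
    have hFV : lin a * G ∈ V := hGW
    have hFfat := hV hFV
    obtain ⟨hhom, hvanish⟩ := Submodule.mem_inf.1 hFfat
    refine Submodule.mem_inf.2 ⟨?_, ?_⟩
    · rw [mem_homogeneousSubmodule]
      apply isHomogeneous_of_lin_mul hla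
      have he : d - 1 + 1 = d := by omega
      rw [he]
      exact (mem_homogeneousSubmodule _ _).1 hhom
    · rw [Submodule.mem_iInf]
      intro i
      rw [mem_vanishingSubmodule]
      have hvi : ∀ l : List (Fin N), l.length < m i →
          eval (P i) (derivAlong K N l (lin a * G)) = 0 := by
        intro l hl
        exact mem_vanishingSubmodule.1 ((Submodule.mem_iInf _).1 hvanish i) l hl
      rcases eq_or_ne (eval (P i) (lin a)) 0 with h0 | h0
      · rw [(hm' i).1 h0]
        exact vanish_res_of_eq ha h0 hvi
      · rw [(hm' i).2 h0]
        exact vanish_res_of_ne h0 hvi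
  haveI : FiniteDimensional K (fatPointSpace K N (d - 1) P m') := fd_of_le_fat le_rfl
  rw [← hrank]
  exact Submodule.finrank_mono hWle

theorem exists_allowed_point [CharZero K] (hN : 3 ≤ N) {a : Fin N → K} {i0 : Fin N}
    (ha : a i0 ≠ 0) (avoid : Finset (Fin N → K)) :
    ∃ Q : Fin N → K, Q ≠ 0 ∧ eval Q (lin a) = 0 ∧ ∀ v ∈ avoid, ∀ c : K, Q ≠ c • v := by
  classical
  have hcard : 1 < ({i0}ᶜ : Finset (Fin N)).card := by
    rw [Finset.card_compl, Finset.card_singleton, Fintype.card_fin]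
    omega
  obtain ⟨j1, hj1, j2, hj2, hj12⟩ := Finset.one_lt_card.1 hcard
  rw [Finset.mem_compl, Finset.mem_singleton] at hj1 hj2
  set s1 : Fin N → K := Pi.single j1 1 with hs1
  set s2 : Fin N → K := Pi.single j2 1 with hs2
  set s3 : Fin N → K := Pi.single i0 1 with hs3
  set Qf : K → (Fin N → K) := fun c => fun j =>
    s1 j + c * s2 j - ((a j1 + c * a j2) / a i0) * s3 j with hQf
  have hQj1 : ∀ c, Qf c j1 = 1 := by
    intro c
    have e1 : s1 j1 = 1 := by rw [hs1]; exact Pi.single_eq_same j1 1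
    have e2 : s2 j1 = 0 := by rw [hs2]; exact Pi.single_eq_of_ne hj12 1
    have e3 : s3 j1 = 0 := by rw [hs3]; exact Pi.single_eq_of_ne hj1 1
    simp [hQf, e1, e2, e3]
  have hQj2 : ∀ c, Qf c j2 = c := by
    intro c
    have e1 : s1 j2 = 0 := by rw [hs1]; exact Pi.single_eq_of_ne hj12.symm 1
    have e2 : s2 j2 = 1 := by rw [hs2]; exact Pi.single_eq_same j2 1
    have e3 : s3 j2 = 0 := by rw [hs3]; exact Pi.single_eq_of_ne hj2 1
    simp [hQf, e1, e2, e3]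
  have hs : ∀ t : Fin N, ∑ j, a j * (Pi.single t (1 : K) : Fin N → K) j = a t := by
    intro t
    rw [Finset.sum_eq_single t (fun j _ hj => by rw [Pi.single_eq_of_ne hj, mul_zero])
      (by simp)]
    rw [Pi.single_eq_same, mul_one]
  have heval : ∀ c, eval (Qf c) (lin a) = 0 := by
    intro c
    rw [eval_lin]
    have hterm : ∀ j, a j * Qf c j = a j * s1 j + c * (a j * s2 j)
        - ((a j1 + c * a j2) / a i0) * (a j * s3 j) := by
      intro j
      simp only [hQf]
      ring
    rw [Finset.sum_congr rfl fun j _ => hterm j]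
    rw [Finset.sum_sub_distrib, Finset.sum_add_distrib, ← Finset.mul_sum, ← Finset.mul_sum]
    rw [hs1, hs2, hs3, hs, hs, hs, div_mul_cancel₀ _ ha, sub_self]
  set bad : Set K := ⋃ v ∈ (↑avoid : Set (Fin N → K)), {c : K | ∃ β : K, Qf c = β • v}
    with hbad
  have hbadfin : bad.Finite := by
    refine Set.Finite.biUnion avoid.finite_toSet fun v _ => ?_
    refine Set.Subsingleton.finite ?_
    intro c hc c' hc'
    obtain ⟨β, hβ⟩ := hc
    obtain ⟨β', hβ'⟩ := hc'
    have e1 : β * v j1 = 1 := by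
      have h := congrFun hβ j1
      rw [hQj1] at h
      simpa using h.symm
    have e1' : β' * v j1 = 1 := by
      have h := congrFun hβ' j1
      rw [hQj1] at h
      simpa using h.symm
    have hvne : v j1 ≠ 0 := by
      intro h
      rw [h, mul_zero] at e1
      exact one_ne_zero e1.symm
    have heqβ : β = β' := mul_right_cancel₀ hvne (e1.trans e1'.symm)
    have hQeq : Qf c = Qf c' := by rw [hβ, hβ', heqβ]
    have h2 := congrFun hQeq j2
    rw [hQj2, hQj2] at h2
    exact h2
  obtain ⟨c, hc⟩ := (hbadfin.infinite_compl).nonempty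
  refine ⟨Qf c, ?_, heval c, ?_⟩
  · intro h0
    have := congrFun h0 j1
    rw [hQj1] at this
    exact one_ne_zero this
  · intro v hv β hβ
    apply hc
    rw [hbad]
    exact Set.mem_biUnion hv ⟨β, hβ⟩

theorem iInf_fin_succ' {α : Type*} [CompleteLattice α] {t : ℕ} (f : Fin (t + 1) → α) :
    ⨅ j, f j = f 0 ⊓ ⨅ j : Fin t, f j.succ := by
  apply le_antisymm
  · exact le_inf (iInf_le _ 0) (le_iInf fun j => iInf_le _ j.succ)
  · refine le_iInf fun j => ?_
    induction j using Fin.cases with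
    | zero => exact inf_le_left
    | succ i => exact inf_le_right.trans (iInf_le _ i)

theorem finrank_inf_ker_succ_le {V : Submodule K (MvPolynomial (Fin N) K)}
    [FiniteDimensional K V] {Q : Fin N → K} {F : MvPolynomial (Fin N) K}
    (hFV : F ∈ V) (hFQ : eval Q F ≠ 0) :
    finrank K ↥(V ⊓ vanishingSubmodule K N 1 Q) + 1 ≤ finrank K V := by
  rw [vanishingSubmodule_one]
  set f : V →ₗ[K] K := (aeval (R := K) Q).toLinearMap.comp V.subtype with hf
  have hker : V ⊓ LinearMap.ker (aeval (R := K) Q).toLinearMap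
      = Submodule.map V.subtype (LinearMap.ker f) := by
    rw [hf, LinearMap.ker_comp, Submodule.map_comap_subtype]
  rw [hker, Submodule.finrank_map_subtype_eq]
  have hrn := LinearMap.finrank_range_add_finrank_ker f
  have hne : LinearMap.range f ≠ ⊥ := by
    intro hbot
    have hmem : f ⟨F, hFV⟩ ∈ LinearMap.range f := LinearMap.mem_range_self _ _
    rw [hbot, Submodule.mem_bot] at hmem
    apply hFQ
    rw [← aeval_eq_eval']
    exact hmem
  have hle : finrank K (LinearMap.range f) ≤ 1 := by
    have := Submodule.finrank_le (LinearMap.range f)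
    rwa [Module.finrank_self] at this
  have hpos : finrank K (LinearMap.range f) ≠ 0 := by
    intro h0
    exact hne (Submodule.finrank_eq_zero.mp h0)
  omega



theorem nonprop_symm {x y : Fin N → K} (hx : x ≠ 0) (h : ∀ c : K, y ≠ c • x) :
    ∀ c : K, x ≠ c • y := by
  intro c hc
  rcases eq_or_ne c 0 with rfl | hc0
  · rw [zero_smul] at hc
    exact hx hc
  · apply h c⁻¹
    rw [hc, smul_smul, inv_mul_cancel₀ hc0, one_smul]

theorem main_aux [CharZero K] (hN : 3 ≤ N) {a : Fin N → K} {i0 : Fin N} (ha : a i0 ≠ 0)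
    {k : ℕ} {P : Fin k → (Fin N → K)} {m m' : Fin k → ℕ}
    (hm' : ∀ i, (eval (P i) (lin a) = 0 → m' i = m i - 1) ∧
      (eval (P i) (lin a) ≠ 0 → m' i = m i))
    {d : ℕ} (hd : 0 < d) {γ : ℕ}
    (hRes : finrank K ↥(fatPointSpace K N (d - 1) P m') ≤ γ) :
    ∀ t : ℕ, ∀ V : Submodule K (MvPolynomial (Fin N) K), V ≤ fatPointSpace K N d P m →
      ∀ avoid : Finset (Fin N → K), finrank K ↥V ≤ γ + t →
      ∃ Q : Fin t → (Fin N → K),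
        (∀ j, Q j ≠ 0) ∧
        (∀ j, eval (Q j) (lin a) = 0) ∧
        (∀ j j', j ≠ j' → ∀ c : K, Q j ≠ c • Q j') ∧
        (∀ j, ∀ v ∈ avoid, ∀ c : K, Q j ≠ c • v) ∧
        finrank K ↥(V ⊓ ⨅ j, vanishingSubmodule K N 1 (Q j)) ≤ γ := by
  intro t
  induction t with
  | zero =>
    intro V hV avoid hrank
    refine ⟨Fin.elim0, fun j => j.elim0, fun j => j.elim0, fun j => j.elim0,
      fun j => j.elim0, ?_⟩
    rw [iInf_of_empty, inf_top_eq]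
    simpa using hrank
  | succ t ih =>
    intro V hV avoid hrank
    haveI : FiniteDimensional K V := fd_of_le_fat hV
    classical
    have hstep : ∃ Q0 : Fin N → K, Q0 ≠ 0 ∧ eval Q0 (lin a) = 0 ∧
        (∀ v ∈ avoid, ∀ c : K, Q0 ≠ c • v) ∧
        finrank K ↥(V ⊓ vanishingSubmodule K N 1 Q0) ≤ γ + t := by
      by_cases hgood : ∃ Q0 : Fin N → K, (Q0 ≠ 0 ∧ eval Q0 (lin a) = 0 ∧
          ∀ v ∈ avoid, ∀ c : K, Q0 ≠ c • v) ∧ ∃ F ∈ V, eval Q0 F ≠ 0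
      · obtain ⟨Q0, ⟨h1, h2, h3⟩, F, hFV, hFQ⟩ := hgood
        refine ⟨Q0, h1, h2, h3, ?_⟩
        have hdrop := finrank_inf_ker_succ_le hFV hFQ
        omega
      · push_neg at hgood
        obtain ⟨Q0, h1, h2, h3⟩ := exists_allowed_point hN ha avoid
        refine ⟨Q0, h1, h2, h3, ?_⟩
        have hdiv : finrank K ↥V ≤ finrank K ↥(fatPointSpace K N (d - 1) P m') := by
          apply finrank_le_div hN ha hm' hd hV avoid
          intro F hF Q hQ0 hQl hQp
          exact hgood Q ⟨hQ0, hQl, hQp⟩ F hF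
        have hmono : finrank K ↥(V ⊓ vanishingSubmodule K N 1 Q0) ≤ finrank K ↥V :=
          Submodule.finrank_mono inf_le_left
        omega
    obtain ⟨Q0, hQ0ne, hQ0l, hQ0av, hQ0rank⟩ := hstep
    obtain ⟨Q', hQ'ne, hQ'l, hQ'pair, hQ'av, hQ'rank⟩ :=
      ih (V ⊓ vanishingSubmodule K N 1 Q0) (le_trans inf_le_left hV)
        (insert Q0 avoid) hQ0rank
    have hQ'avQ0 : ∀ i : Fin t, ∀ c : K, Q' i ≠ c • Q0 := by
      intro i c
      exact hQ'av i Q0 (Finset.mem_insert_self _ _) c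
    set QQ : Fin (t + 1) → (Fin N → K) := Fin.cons (α := fun _ => Fin N → K) Q0 Q' with hQQ
    have hQQ0 : QQ 0 = Q0 := rfl
    have hQQs : ∀ i : Fin t, QQ i.succ = Q' i := fun i => rfl
    refine ⟨QQ, ?_, ?_, ?_, ?_, ?_⟩
    · intro j
      induction j using Fin.cases with
      | zero => rw [hQQ0]; exact hQ0ne
      | succ i => rw [hQQs]; exact hQ'ne i
    · intro j
      induction j using Fin.cases with
      | zero => rw [hQQ0]; exact hQ0l
      | succ i => rw [hQQs]; exact hQ'l i
    · intro j j' hjj' c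
      induction j using Fin.cases with
      | zero =>
        induction j' using Fin.cases with
        | zero => exact absurd rfl hjj'
        | succ i' =>
          rw [hQQ0, hQQs]
          exact nonprop_symm hQ0ne (fun c' => hQ'avQ0 i' c') c
      | succ i =>
        induction j' using Fin.cases with
        | zero =>
          rw [hQQs, hQQ0]
          exact hQ'avQ0 i c
        | succ i' =>
          rw [hQQs, hQQs]
          exact hQ'pair i i' (fun h => hjj' (by rw [h])) c
    · intro j v hv c
      induction j using Fin.cases with
      | zero =>
        rw [hQQ0]
        exact hQ0av v hv c
      | succ i =>
        rw [hQQs]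
        exact hQ'av i v (Finset.mem_insert_of_mem hv) c
    · have hsplit : (⨅ j, vanishingSubmodule K N 1 (QQ j))
          = vanishingSubmodule K N 1 Q0 ⊓ ⨅ j : Fin t, vanishingSubmodule K N 1 (Q' j) := by
        rw [iInf_fin_succ']
        congr 1
      rw [hsplit, ← inf_assoc]
      exact hQ'rank


end Stmt8H
end

theorem stmt8 (K : Type*) [Field K] [IsAlgClosed K] [CharZero K]
    (n : ℕ) (hn : 2 ≤ n)
    (ℓ : MvPolynomial (Fin (n + 1)) K) (hℓ : ℓ ≠ 0) (hℓhom : ℓ.IsHomogeneous 1)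
    {k : ℕ} (P : Fin k → (Fin (n + 1) → K)) (hP : ProjDistinct P)
    (m m' : Fin k → ℕ)
    (hm' : ∀ i, (MvPolynomial.eval (P i) ℓ = 0 → m' i = m i - 1) ∧
      (MvPolynomial.eval (P i) ℓ ≠ 0 → m' i = m i))
    (d z γ : ℕ) (hd : 0 < d) (hz : 0 < z)
    (hY : Module.finrank K (fatPointSpace K (n + 1) d P m) ≤ γ + z)
    (hRes : Module.finrank K (fatPointSpace K (n + 1) (d - 1) P m') ≤ γ) :
    ∃ Q : Fin z → (Fin (n + 1) → K),
      (∀ j, Q j ≠ 0) ∧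
      (∀ j, MvPolynomial.eval (Q j) ℓ = 0) ∧
      (∀ j j', j ≠ j' → ∀ c : K, Q j ≠ c • Q j') ∧
      (∀ j i, ∀ c : K, Q j ≠ c • P i) ∧
      Module.finrank K
        ↥(fatPointSpace K (n + 1) d P m ⊓ ⨅ j, vanishingSubmodule K (n + 1) 1 (Q j)) ≤ γ := by
  classical
  obtain ⟨a, rfl⟩ := Stmt8H.exists_lin_rep hℓhom
  have hex : ∃ i0, a i0 ≠ 0 := by
    by_contra hc
    push_neg at hc
    apply hℓ
    rw [Stmt8H.lin]
    exact Finset.sum_eq_zero fun i _ => by rw [hc, map_zero, zero_mul]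
  obtain ⟨i0, ha⟩ := hex
  set avoid : Finset (Fin (n + 1) → K) := Finset.image P Finset.univ with havoid
  obtain ⟨Q, h1, h2, h3, h4, h5⟩ := Stmt8H.main_aux (by omega) ha hm' hd hRes z
    (fatPointSpace K (n + 1) d P m) le_rfl avoid hY
  refine ⟨Q, h1, h2, h3, ?_, h5⟩
  intro j i c
  exact h4 j (P i) (Finset.mem_image_of_mem P (Finset.mem_univ i)) c
end

section
/- Let K be any field, let P_1, …, P_8, P_9 be any 9 points of P^3 over K. Then there exists a nonzero homogeneous polynomial of degree 8 in K[x0,x1,x2,x3] vanishing to order 4 at P_1, …, P_8 and to order 3 at P_9. In particular, since a general union of 8 4-points and 1 3-point of P^3 has total length 170 > 165 = C(11,3), it does not have good postulation in degree 8. -/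
open MvPolynomial

section Aux

variable {K : Type*} [CommRing K]

lemma aux_pderiv_dvd {n : ℕ} (Q F : MvPolynomial (Fin n) K) (m : ℕ)
    (i : Fin n) (h : Q ^ (m + 1) ∣ F) : Q ^ m ∣ pderiv i F := by
  obtain ⟨g, rfl⟩ := h
  rw [pderiv_mul, pderiv_pow]
  refine dvd_add ?_ ?_
  · simp only [Nat.add_sub_cancel]
    exact Dvd.dvd.mul_right (Dvd.dvd.mul_right (dvd_mul_left _ _) _) _
  · exact Dvd.dvd.mul_right (pow_dvd_pow Q (Nat.le_succ m)) _

lemma aux_derivAlong_dvd {n : ℕ} (Q : MvPolynomial (Fin n) K)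
    (l : List (Fin n)) (N : ℕ) (h : l.length ≤ N) :
    Q ^ (N - l.length) ∣ derivAlong K n l (Q ^ N) := by
  unfold derivAlong
  induction l with
  | nil => simp
  | cons i t ih =>
    have ht : t.length ≤ N := le_trans (Nat.le_succ _) h
    have step : Q ^ (N - (i :: t).length) ∣ pderiv i
        (((t.map fun i => (MvPolynomial.pderiv (R := K) i).toLinearMap).prod :
          Module.End K (MvPolynomial (Fin n) K)) (Q ^ N)) := by
      apply aux_pderiv_dvd Q _ _ i
      have he : N - (i :: t).length + 1 = N - t.length := by
        simp only [List.length_cons] at h ⊢; omega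
      rw [he]; exact ih ht
    simpa [List.map_cons, List.prod_cons, Module.End.mul_apply] using step

lemma aux_pow_mem_vanishing (Q : MvPolynomial (Fin 4) K) (Pt : Fin 4 → K)
    (h0 : aeval Pt Q = 0) (m N : ℕ) (hm : m ≤ N) :
    Q ^ N ∈ vanishingSubmodule K 4 m Pt := by
  simp only [vanishingSubmodule, Submodule.mem_iInf]
  intro l hl
  have hlm : l.length < m := hl
  rw [LinearMap.mem_ker, LinearMap.comp_apply]
  have hd := aux_derivAlong_dvd Q l N (by omega)
  have hQd : Q ∣ derivAlong K 4 l (Q ^ N) :=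
    dvd_trans (dvd_pow_self Q (by omega : N - l.length ≠ 0)) hd
  obtain ⟨g, hg⟩ := hQd
  rw [hg, AlgHom.toLinearMap_apply, map_mul, h0, zero_mul]

end Aux

def pa : Fin 10 → Fin 4
  | 0 => 0 | 1 => 0 | 2 => 0 | 3 => 0 | 4 => 1 | 5 => 1 | 6 => 1 | 7 => 2 | 8 => 2 | 9 => 3

def pb : Fin 10 → Fin 4
  | 0 => 0 | 1 => 1 | 2 => 2 | 3 => 3 | 4 => 1 | 5 => 2 | 6 => 3 | 7 => 2 | 8 => 3 | 9 => 3

noncomputable def mon : Fin 10 → (Fin 4 →₀ ℕ) := fun j =>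
  Finsupp.single (pa j) 1 + Finsupp.single (pb j) 1

def wt : (Fin 4 →₀ ℕ) → ℕ := fun d => d 0 + 5 * d 1 + 25 * d 2 + 125 * d 3

lemma wt_single (a : Fin 4) : wt (Finsupp.single a 1) = 5 ^ (a : ℕ) := by
  fin_cases a <;> simp [wt, Finsupp.single_apply]

lemma wt_add (d e : Fin 4 →₀ ℕ) : wt (d + e) = wt d + wt e := by
  simp only [wt, Finsupp.add_apply]; ring

lemma wt_mon (j : Fin 10) : wt (mon j) = 5 ^ (pa j : ℕ) + 5 ^ (pb j : ℕ) := by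
  rw [mon, wt_add, wt_single, wt_single]

lemma paw_inj : ∀ j k : Fin 10,
    5 ^ ((pa j : ℕ)) + 5 ^ ((pb j : ℕ)) = 5 ^ ((pa k : ℕ)) + 5 ^ ((pb k : ℕ)) → j = k := by
  decide

lemma mon_inj : Function.Injective mon := by
  intro j k h
  apply paw_inj
  rw [← wt_mon, ← wt_mon, h]

lemma degree_pair (a b : Fin 4) :
    (Finsupp.single a 1 + Finsupp.single b 1 : Fin 4 →₀ ℕ).degree = 2 := by
  have hd : (Finsupp.single a 1 + Finsupp.single b 1 : Fin 4 →₀ ℕ).degree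
      = ∑ i : Fin 4, ((Finsupp.single a 1 + Finsupp.single b 1 : Fin 4 →₀ ℕ)) i :=
    Finset.sum_subset (Finset.subset_univ _) (fun x _ hx => Finsupp.notMem_support_iff.mp hx)
  rw [hd]
  simp [Finsupp.single_apply, Finset.sum_add_distrib, Finset.sum_ite_eq']

lemma mon_degree (j : Fin 10) : (mon j).degree = 2 := degree_pair _ _

lemma exists_quadric (K : Type*) [Field K] (P : Fin 9 → (Fin 4 → K)) :
    ∃ Q : MvPolynomial (Fin 4) K, Q ≠ 0 ∧ Q.IsHomogeneous 2 ∧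
      ∀ i : Fin 9, aeval (P i) Q = 0 := by
  set φ : (Fin 10 → K) →ₗ[K] MvPolynomial (Fin 4) K :=
    Fintype.linearCombination K (fun j => (monomial (mon j) (1 : K))) with hφ
  have hφ_apply : ∀ c : Fin 10 → K, φ c = ∑ j, c j • monomial (mon j) (1 : K) := fun c =>
    Fintype.linearCombination_apply K _ c
  have hcoeff : ∀ (c : Fin 10 → K) (k : Fin 10), coeff (mon k) (φ c) = c k := by
    intro c k
    rw [hφ_apply, coeff_sum]
    have hterm : ∀ j : Fin 10, coeff (mon k) (c j • monomial (mon j) (1 : K))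
        = if j = k then c j else 0 := by
      intro j
      rw [coeff_smul, coeff_monomial]
      simp [mon_inj.eq_iff]
    simp_rw [hterm]
    simp
  have hφinj : Function.Injective φ := by
    rw [← LinearMap.ker_eq_bot, eq_bot_iff]
    intro c hc
    rw [LinearMap.mem_ker] at hc
    have : c = 0 := by
      funext k
      have := hcoeff c k
      rw [hc] at this
      simpa using this.symm
    simp [this]
  set L : MvPolynomial (Fin 4) K →ₗ[K] (Fin 9 → K) :=
    LinearMap.pi (fun i => (aeval (P i) : MvPolynomial (Fin 4) K →ₐ[K] K).toLinearMap) with hL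
  have hT : ¬ Function.Injective (L.comp φ) := by
    intro h
    have hle := LinearMap.finrank_le_finrank_of_injective h
    rw [Module.finrank_fin_fun, Module.finrank_fin_fun] at hle
    omega
  have hker : LinearMap.ker (L.comp φ) ≠ ⊥ := by
    intro h
    exact hT (LinearMap.ker_eq_bot.mp h)
  obtain ⟨c, hcm, hc0⟩ := Submodule.exists_mem_ne_zero_of_ne_bot hker
  rw [LinearMap.mem_ker] at hcm
  refine ⟨φ c, ?_, ?_, ?_⟩
  · intro h
    apply hc0
    exact hφinj (by simpa using h)
  · rw [← mem_homogeneousSubmodule, hφ_apply]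
    refine Submodule.sum_mem _ (fun j _ => Submodule.smul_mem _ _ ?_)
    rw [mem_homogeneousSubmodule]
    exact isHomogeneous_monomial _ (mon_degree j)
  · intro i
    have := congrFun (congrArg (fun f => f) hcm) i
    have h2 : (L (φ c)) i = 0 := by
      rw [← LinearMap.comp_apply, hcm]; rfl
    simpa [hL, LinearMap.pi_apply] using h2

theorem stmt10 (K : Type*) [Field K]
    (P : Fin 9 → (Fin 4 → K)) (hP : ∀ i, P i ≠ 0) :
    (∃ F : MvPolynomial (Fin 4) K, F ≠ 0 ∧ F.IsHomogeneous 8 ∧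
      (∀ i : Fin 9, (i : ℕ) < 8 → F ∈ vanishingSubmodule K 4 4 (P i)) ∧
      F ∈ vanishingSubmodule K 4 3 (P 8)) ∧
    8 * Nat.choose 6 3 + Nat.choose 5 3 > Nat.choose 11 3 := by
  constructor
  · obtain ⟨Q, hQ0, hQh, hQv⟩ := exists_quadric K P
    refine ⟨Q ^ 4, pow_ne_zero 4 hQ0, ?_, ?_, ?_⟩
    · have := hQh.pow 4
      norm_num at this
      exact this
    · intro i _
      exact aux_pow_mem_vanishing Q (P i) (hQv i) 4 4 le_rfl
    · exact aux_pow_mem_vanishing Q (P 8) (hQv 8) 3 4 (by norm_num)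
  · decide
end
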